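/- Let Γ be a GKM-graph and let Ξ_1 and Ξ_2 be faces of Γ having a common vertex v such that star_{Ξ_1}(v) = star_{Ξ_2}(v). Then Ξ_1 = Ξ_2, i.e. V_{Ξ_1} = V_{Ξ_2} and E_{Ξ_1} = E_{Ξ_2}. (A face of a GKM-graph is uniquely determined by its star at any of its vertices.) -/
import Mathlib


/-- The star of a set `F` of (directed) edges at a vertex `v`:
all edges in `F` with initial vertex `v`. -/
def edgeStar {V : Type} (F : Set (V × V)) (v : V) : Set (V × V) :=
  {e ∈ F | e.1 = v}

/-- A GKM-graph on the vertex type `V`, with connection `nabla` and axial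
function `alpha` taking values in `ℤ^k`.  Edges are ordered pairs of distinct
vertices; the edge set is closed under reversal and the underlying graph is
connected.  The connection `∇_e` restricts to a bijection from the star of
`i(e)` onto the star of `t(e)` sending `e` to its reversal, and the axial
function satisfies the rank, opposite sign and congruence conditions. -/
structure GKMGraph (V : Type) (k : ℕ) : Type where
  E : Set (V × V)
  nabla : V × V → V × V → V × V
  alpha : V × V → Fin k → ℤ
  vert_nonempty : Nonempty V
  no_loops : ∀ e ∈ E, e.1 ≠ e.2
  rev_mem : ∀ e ∈ E, (e.2, e.1) ∈ E
  graph_connected : ∀ u v : V, Relation.ReflTransGen (fun a b => (a, b) ∈ E) u v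
  nabla_bijOn : ∀ e ∈ E, Set.BijOn (nabla e) (edgeStar E e.1) (edgeStar E e.2)
  nabla_self : ∀ e ∈ E, nabla e e = (e.2, e.1)
  rank : ∀ v : V, Submodule.span ℤ (alpha '' edgeStar E v) = ⊤
  opposite : ∀ e ∈ E, alpha (e.2, e.1) = -alpha e
  congruence : ∀ e ∈ E, ∀ e' ∈ E, e'.1 = e.1 →
    ∃ c : ℤ, alpha (nabla e e') = alpha e' + c • alpha e

namespace GKMGraph

variable {V : Type} {k : ℕ}

/-- The star of the GKM-graph `Γ` at a vertex `v`. -/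
def star (Γ : GKMGraph V k) (v : V) : Set (V × V) := edgeStar Γ.E v

/-- `Γ.IsFace W F` : the subgraph with vertex set `W` and edge set `F` is a
face (totally geodesic subgraph) of `Γ`: it is a nonempty connected regular
subgraph closed under edge reversal and invariant under the connection. -/
structure IsFace (Γ : GKMGraph V k) (W : Set V) (F : Set (V × V)) : Prop where
  nonempty : W.Nonempty
  sub : F ⊆ Γ.E
  src_mem : ∀ e ∈ F, e.1 ∈ W
  tgt_mem : ∀ e ∈ F, e.2 ∈ W
  rev_mem : ∀ e ∈ F, (e.2, e.1) ∈ F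
  connected : ∀ u ∈ W, ∀ v ∈ W, Relation.ReflTransGen (fun a b => (a, b) ∈ F) u v
  invariant : ∀ e ∈ F, ∀ e' ∈ F, e'.1 = e.1 → Γ.nabla e e' ∈ F
  regular : ∃ r : ℕ, ∀ v ∈ W, (edgeStar F v).Finite ∧ (edgeStar F v).ncard = r

/-- `Γ.IsNFace W F r` : the subgraph `(W, F)` is an `r`-face of `Γ`,
i.e. a face all of whose stars have exactly `r` elements. -/
def IsNFace (Γ : GKMGraph V k) (W : Set V) (F : Set (V × V)) (r : ℕ) : Prop :=
  Γ.IsFace W F ∧ ∀ v ∈ W, (edgeStar F v).Finite ∧ (edgeStar F v).ncard = r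

/-- The span `α⟨Ξ⟩` of a face with edge set `F`, computed at the vertex `v`. -/
def faceSpan (Γ : GKMGraph V k) (F : Set (V × V)) (v : V) : Submodule ℤ (Fin k → ℤ) :=
  Submodule.span ℤ (Γ.alpha '' edgeStar F v)

/-- `Π_γ`, the composite `∇_{e_r} ∘ ⋯ ∘ ∇_{e_1}` of the connection along the
edge path `γ = (e_1, …, e_r)`, applied to an edge `e`. -/
def transport (Γ : GKMGraph V k) (γ : List (V × V)) (e : V × V) : V × V :=
  γ.foldl (fun x g => Γ.nabla g x) e

/-- An edge of `Γ` transversal to the subgraph `(W, F)`: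
it emanates from a vertex of `W` but does not belong to `F`. -/
def IsTransversal (Γ : GKMGraph V k) (W : Set V) (F : Set (V × V)) (e : V × V) : Prop :=
  e ∈ Γ.E ∧ e ∉ F ∧ e.1 ∈ W

/-- A chord of the subgraph `(W, F)`: a transversal edge both of whose
endpoints lie in `W`. -/
def IsChord (Γ : GKMGraph V k) (W : Set V) (F : Set (V × V)) (e : V × V) : Prop :=
  Γ.IsTransversal W F e ∧ e.2 ∈ W

/-- `Γ` is `j`-independent: the values of the axial function on any `j`
distinct edges with a common origin are linearly independent over `ℤ`. -/
def IsIndependent (Γ : GKMGraph V k) (j : ℕ) : Prop :=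
  ∀ v : V, ∀ s : Finset (V × V), ↑s ⊆ Γ.star v → s.card = j →
    LinearIndependent ℤ (fun e : {x : V × V // x ∈ s} => Γ.alpha e.1)

/-- `Γ` is `j`-complete: any `i ≤ j` distinct edges with a common origin `v`
form the star at `v` of some `i`-face of `Γ`. -/
def IsComplete (Γ : GKMGraph V k) (j : ℕ) : Prop :=
  ∀ v : V, ∀ i : ℕ, i ≤ j → ∀ s : Finset (V × V), ↑s ⊆ Γ.star v → s.card = i →
    ∃ (W : Set V) (F : Set (V × V)), Γ.IsNFace W F i ∧ v ∈ W ∧ edgeStar F v = ↑s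

/-- `Γ` is `n`-valent: every star of `Γ` has exactly `n` elements. -/
def IsValent (Γ : GKMGraph V k) (n : ℕ) : Prop :=
  ∀ v : V, (Γ.star v).Finite ∧ (Γ.star v).ncard = n

/-- `Γ'` is an extension of `Γ`: both GKM-graphs have the same underlying
graph and the same connection, and there is a surjective homomorphism
`p : ℤ^{k'} → ℤ^k` with `p ∘ α' = α` on all edges. -/
def IsExtension {k' : ℕ} (Γ' : GKMGraph V k') (Γ : GKMGraph V k) : Prop :=
  Γ'.E = Γ.E ∧
  (∀ e ∈ Γ.E, ∀ e' ∈ Γ.E, e'.1 = e.1 → Γ'.nabla e e' = Γ.nabla e e') ∧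
  ∃ p : (Fin k' → ℤ) →ₗ[ℤ] (Fin k → ℤ), Function.Surjective p ∧
    ∀ e ∈ Γ.E, p (Γ'.alpha e) = Γ.alpha e

end GKMGraph

/-- An edge path contained in the edge set `F`: consecutive edges are
composable (`t(e_m) = i(e_{m+1})`). -/
def IsEdgePathIn {V : Type} (F : Set (V × V)) (γ : List (V × V)) : Prop :=
  (∀ g ∈ γ, g ∈ F) ∧ γ.Chain' (fun g h => g.2 = h.1)

lemma face_star_image {V : Type} {k : ℕ} (Γ : GKMGraph V k) {W : Set V}
    {F : Set (V × V)} (h : Γ.IsFace W F) {e : V × V} (he : e ∈ F) :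
    edgeStar F e.2 = Γ.nabla e '' edgeStar F e.1 := by
  have heE : e ∈ Γ.E := h.sub he
  have hbij := Γ.nabla_bijOn e heE
  have hsub : edgeStar F e.1 ⊆ edgeStar Γ.E e.1 := fun x hx => ⟨h.sub hx.1, hx.2⟩
  have hmaps : Γ.nabla e '' edgeStar F e.1 ⊆ edgeStar F e.2 := by
    rintro x ⟨e', he', rfl⟩
    exact ⟨h.invariant e he e' he'.1 he'.2, (hbij.mapsTo (hsub he')).2⟩
  obtain ⟨r, hr⟩ := h.regular
  obtain ⟨fin1, card1⟩ := hr e.1 (h.src_mem e he)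
  obtain ⟨fin2, card2⟩ := hr e.2 (h.tgt_mem e he)
  have hinj : Set.InjOn (Γ.nabla e) (edgeStar F e.1) := hbij.injOn.mono hsub
  have hcard : (Γ.nabla e '' edgeStar F e.1).ncard = r := by
    rw [Set.ncard_image_of_injOn hinj, card1]
  exact (Set.eq_of_subset_of_ncard_le hmaps (by rw [hcard, card2]) fin2).symm

lemma face_sub_of_star_eq {V : Type} {k : ℕ} (Γ : GKMGraph V k)
    {W₁ W₂ : Set V} {F₁ F₂ : Set (V × V)}
    (h₁ : Γ.IsFace W₁ F₁) (h₂ : Γ.IsFace W₂ F₂)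
    {v : V} (hv₁ : v ∈ W₁) (hv₂ : v ∈ W₂)
    (hstar : edgeStar F₁ v = edgeStar F₂ v) :
    W₁ ⊆ W₂ ∧ F₁ ⊆ F₂ := by
  have key : ∀ u ∈ W₁, u ∈ W₂ ∧ edgeStar F₁ u = edgeStar F₂ u := by
    intro u hu
    have hpath := h₁.connected v hv₁ u hu
    induction hpath with
    | refl => exact ⟨hv₂, hstar⟩
    | @tail b c hab hbc ih =>
      have hb := ih (h₁.src_mem (b, c) hbc)
      have he₁ : (b, c) ∈ edgeStar F₁ b := ⟨hbc, rfl⟩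
      have he₂ : (b, c) ∈ F₂ := (hb.2 ▸ he₁).1
      refine ⟨h₂.tgt_mem (b, c) he₂, ?_⟩
      have i1 := face_star_image Γ h₁ hbc
      have i2 := face_star_image Γ h₂ he₂
      simp only at i1 i2
      rw [i1, i2, hb.2]
  refine ⟨fun u hu => (key u hu).1, fun e he => ?_⟩
  have := (key e.1 (h₁.src_mem e he)).2
  exact ((this ▸ (⟨he, rfl⟩ : e ∈ edgeStar F₁ e.1)) : e ∈ edgeStar F₂ e.1).1

/-- a face of a GKM-graph is uniquely determined by its star at
any of its vertices. -/
theorem face_eq_of_star_eq {V : Type} {k : ℕ} (Γ : GKMGraph V k)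
    (W₁ W₂ : Set V) (F₁ F₂ : Set (V × V))
    (h₁ : Γ.IsFace W₁ F₁) (h₂ : Γ.IsFace W₂ F₂)
    (v : V) (hv₁ : v ∈ W₁) (hv₂ : v ∈ W₂)
    (hstar : edgeStar F₁ v = edgeStar F₂ v) :
    W₁ = W₂ ∧ F₁ = F₂ := by
  obtain ⟨hW12, hF12⟩ := face_sub_of_star_eq Γ h₁ h₂ hv₁ hv₂ hstar
  obtain ⟨hW21, hF21⟩ := face_sub_of_star_eq Γ h₂ h₁ hv₂ hv₁ hstar.symm
  exact ⟨hW12.antisymm hW21, hF12.antisymm hF21⟩
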